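/- Let H₁, H₂ ∈ (1/2, 1) and set c_{a,h} = a^{−h/2} Γ(h/2). For a > 0 define g_a : ℝ → ℝ by g_a(x) = ∫₀¹ ( c_{a,H₂} (s − x)₊^{H₁/2 − 1} + c_{a,H₁} (s − x)₊^{H₂/2 − 1} ) e^{a s} ds. Then the family (g_a)_{a > 0} is linearly independent in the real vector space of functions ℝ → ℝ; in particular, for every n the functions g_{a₁}, …, g_{a_n} with distinct a₁, …, a_n > 0 span an n-dimensional subspace. (Consequently, the integral operator with kernel φ(x,y) = ∫₀¹ K_{H₁,H₂}(s,x,y) ds has infinite-dimensional range.) -/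

import Mathlib

open MeasureTheory

/-- `u₊^p`: equals `u ^ p` (real power) if `u > 0`, and `0` otherwise. -/
noncomputable def plusPow (u p : ℝ) : ℝ := if 0 < u then u ^ p else 0

/-- `c_{a,h} = a^{-h/2} Γ(h/2)`. -/
noncomputable def cahConst (a h : ℝ) : ℝ := a ^ (-(h / 2)) * Real.Gamma (h / 2)

/-- `g_a(x) = ∫₀¹ (c_{a,H₂} (s−x)₊^{H₁/2−1} + c_{a,H₁} (s−x)₊^{H₂/2−1}) e^{as} ds`,
the image of `f_a(y) = e^{ay} 𝟙{y≤1}` under the integral operator with kernel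
`φ(x,y) = ∫₀¹ K_{H₁,H₂}(s,x,y) ds`. -/
noncomputable def gFun (H₁ H₂ a x : ℝ) : ℝ :=
  ∫ s in (0:ℝ)..1,
    (cahConst a H₂ * plusPow (s - x) (H₁ / 2 - 1) +
     cahConst a H₁ * plusPow (s - x) (H₂ / 2 - 1)) * Real.exp (a * s)

open Filter Set intervalIntegral

noncomputable def psiA (H₁ H₂ a t : ℝ) : ℝ :=
  cahConst a H₂ * t ^ (H₁ / 2 - 1) + cahConst a H₁ * t ^ (H₂ / 2 - 1)
noncomputable def GG (H₁ H₂ a u : ℝ) : ℝ :=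
  ∫ t in (0:ℝ)..u, psiA H₁ H₂ a t * Real.exp (a * t)

section aux

variable {H₁ H₂ : ℝ} (hH₁ : H₁ ∈ Set.Ioo (1/2 : ℝ) 1) (hH₂ : H₂ ∈ Set.Ioo (1/2 : ℝ) 1)

include hH₁ hH₂ in
lemma psiA_intble (a u v : ℝ) :
    IntervalIntegrable (fun t => psiA H₁ H₂ a t * Real.exp (a * t)) volume u v := by
  have h₁ : (-1:ℝ) < H₁ / 2 - 1 := by have := hH₁.1; linarith
  have h₂ : (-1:ℝ) < H₂ / 2 - 1 := by have := hH₂.1; linarith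
  have i1 : IntervalIntegrable (fun t : ℝ => t ^ (H₁ / 2 - 1)) volume u v :=
    intervalIntegral.intervalIntegrable_rpow' h₁
  have i2 : IntervalIntegrable (fun t : ℝ => t ^ (H₂ / 2 - 1)) volume u v :=
    intervalIntegral.intervalIntegrable_rpow' h₂
  have : IntervalIntegrable (fun t => psiA H₁ H₂ a t) volume u v := by
    simpa [psiA] using (i1.const_mul (cahConst a H₂)).add (i2.const_mul (cahConst a H₁))
  exact this.mul_continuousOn (Real.continuous_exp.comp (continuous_const.mul continuous_id)).continuousOn

include hH₁ hH₂ in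
lemma gFun_repr (a : ℝ) {x : ℝ} (hx : x ∈ Set.Ioo (0:ℝ) 1) :
    gFun H₁ H₂ a x = Real.exp (a * x) * GG H₁ H₂ a (1 - x) := by
  have hp₁ : H₁ / 2 - 1 ≠ 0 := by have := hH₁.2; intro h; nlinarith [hH₁.1]
  have hp₂ : H₂ / 2 - 1 ≠ 0 := by have := hH₂.2; intro h; nlinarith [hH₂.1]
  set F : ℝ → ℝ := fun s => psiA H₁ H₂ a (s - x) * Real.exp (a * s) with hF
  have hF0 : F x = 0 := by
    simp [hF, psiA, Real.zero_rpow hp₁, Real.zero_rpow hp₂]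
  have key : ∀ s : ℝ,
      (cahConst a H₂ * plusPow (s - x) (H₁ / 2 - 1) +
       cahConst a H₁ * plusPow (s - x) (H₂ / 2 - 1)) * Real.exp (a * s)
      = if x < s then F s else 0 := by
    intro s
    simp only [plusPow, psiA, hF]
    rcases lt_trichotomy x s with h | h | h
    · have : (0:ℝ) < s - x := by linarith
      simp [this, if_pos h]
    · subst h
      simp [Real.zero_rpow hp₁, Real.zero_rpow hp₂]
    · have h1 : ¬ (0:ℝ) < s - x := by linarith
      simp [h1, if_neg (not_lt.2 h.le)]
  have hFint : IntervalIntegrable F volume x 1 := by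
    have h0 := (psiA_intble hH₁ hH₂ a 0 (1 - x)).comp_sub_right x
    have h0' : IntervalIntegrable
        (fun s => (psiA H₁ H₂ a (s - x) * Real.exp (a * (s - x))) * Real.exp (a * x))
        volume x 1 := by
      have := h0.mul_const (Real.exp (a * x))
      simpa using this
    apply h0'.congr
    intro s _
    simp only [hF]
    rw [mul_assoc, ← Real.exp_add]
    ring_nf
  have hIf : IntervalIntegrable (fun s => if x < s then F s else 0) volume x 1 := by
    apply hFint.congr
    rw [Set.uIoc_of_le hx.2.le]
    intro s hs
    simp only [if_pos hs.1]
  have hIf0 : IntervalIntegrable (fun s => if x < s then F s else 0) volume 0 x := by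
    apply (_root_.intervalIntegrable_const (c := (0:ℝ))).congr
    rw [Set.uIoc_of_le hx.1.le]
    intro s hs
    simp only [if_neg (not_lt.2 hs.2)]
  have h1 : (∫ s in (0:ℝ)..x, (if x < s then F s else 0)) = 0 := by
    rw [intervalIntegral.integral_congr (g := fun _ => (0:ℝ))]
    · simp
    · intro s hs
      rw [Set.uIcc_of_le hx.1.le] at hs
      exact if_neg (not_lt.2 hs.2)
  have h2 : (∫ s in x..1, (if x < s then F s else 0)) = ∫ s in x..1, F s := by
    apply intervalIntegral.integral_congr
    intro s hs
    rw [Set.uIcc_of_le hx.2.le] at hs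
    rcases eq_or_lt_of_le hs.1 with h | h
    · simp [← h, hF0]
    · simp [h]
  have h3 : (∫ s in x..1, F s) = Real.exp (a * x) * GG H₁ H₂ a (1 - x) := by
    calc (∫ s in x..1, F s)
        = ∫ t in x - x..1 - x, psiA H₁ H₂ a t * Real.exp (a * (t + x)) := by
          rw [← intervalIntegral.integral_comp_sub_right
            (fun t => psiA H₁ H₂ a t * Real.exp (a * (t + x))) x]
          apply intervalIntegral.integral_congr
          intro s _
          simp only [hF, sub_add_cancel]
      _ = ∫ t in (0:ℝ)..(1 - x), Real.exp (a * x) * (psiA H₁ H₂ a t * Real.exp (a * t)) := by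
          rw [sub_self]
          apply intervalIntegral.integral_congr
          intro t _
          simp only [mul_add, Real.exp_add]
          ring
      _ = Real.exp (a * x) * GG H₁ H₂ a (1 - x) := by
          rw [intervalIntegral.integral_const_mul]; rfl
  calc gFun H₁ H₂ a x = ∫ s in (0:ℝ)..1, (if x < s then F s else 0) := by
        unfold gFun; simp only [key]
    _ = (∫ s in (0:ℝ)..x, (if x < s then F s else 0))
        + ∫ s in x..1, (if x < s then F s else 0) :=
        (intervalIntegral.integral_add_adjacent_intervals hIf0 hIf).symm
    _ = Real.exp (a * x) * GG H₁ H₂ a (1 - x) := by rw [h1, h2, h3, zero_add]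

include hH₁ hH₂ in
lemma GG_hasDeriv (a : ℝ) {u : ℝ} (hu : 0 < u) :
    HasDerivAt (GG H₁ H₂ a) (psiA H₁ H₂ a u * Real.exp (a * u)) u := by
  have hcontOn : ContinuousOn (fun t : ℝ => psiA H₁ H₂ a t * Real.exp (a * t)) (Set.Ioi 0) := by
    intro y hy
    apply ContinuousAt.continuousWithinAt
    unfold psiA
    have c1 : ContinuousAt (fun t : ℝ => t ^ (H₁ / 2 - 1)) y :=
      Real.continuousAt_rpow_const y _ (Or.inl (ne_of_gt hy))
    have c2 : ContinuousAt (fun t : ℝ => t ^ (H₂ / 2 - 1)) y :=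
      Real.continuousAt_rpow_const y _ (Or.inl (ne_of_gt hy))
    exact ((c1.const_mul _).add (c2.const_mul _)).mul
      ((Real.continuous_exp.comp (continuous_const.mul continuous_id)).continuousAt)
  exact intervalIntegral.integral_hasDerivAt_right (psiA_intble hH₁ hH₂ a 0 u)
    (hcontOn.stronglyMeasurableAtFilter isOpen_Ioi u hu)
    ((hcontOn u hu).continuousAt (Ioi_mem_nhds hu))

include hH₁ hH₂ in
lemma gFun_hasDeriv (a : ℝ) {x : ℝ} (hx : x ∈ Set.Ioo (0:ℝ) 1) :
    HasDerivAt (gFun H₁ H₂ a)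
      (a * gFun H₁ H₂ a x - Real.exp a * psiA H₁ H₂ a (1 - x)) x := by
  have hu : 0 < 1 - x := by linarith [hx.2]
  have hexp : HasDerivAt (fun y : ℝ => Real.exp (a * y)) (Real.exp (a * x) * a) x := by
    simpa using ((hasDerivAt_id x).const_mul a).exp
  have hinner : HasDerivAt (fun y : ℝ => 1 - y) (-1) x := by
    simpa using (hasDerivAt_id x).const_sub 1
  have hGG : HasDerivAt (fun y : ℝ => GG H₁ H₂ a (1 - y))
      ((psiA H₁ H₂ a (1 - x) * Real.exp (a * (1 - x))) * (-1)) x :=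
    (GG_hasDeriv hH₁ hH₂ a hu).comp x hinner
  have hprod := hexp.mul hGG
  have heq : (fun y : ℝ => Real.exp (a * y) * GG H₁ H₂ a (1 - y)) =ᶠ[nhds x] gFun H₁ H₂ a := by
    filter_upwards [Ioo_mem_nhds hx.1 hx.2] with y hy
    exact (gFun_repr hH₁ hH₂ a hy).symm
  have := hprod.congr_of_eventuallyEq heq.symm
  refine this.congr_deriv ?_
  rw [gFun_repr hH₁ hH₂ a hx]
  have : Real.exp a = Real.exp (a * x) * Real.exp (a * (1 - x)) := by
    rw [← Real.exp_add]; ring_nf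
  rw [this]
  ring

include hH₁ hH₂ in
lemma gFun_tendsto (a : ℝ) :
    Tendsto (fun x => gFun H₁ H₂ a x) (nhdsWithin 1 (Set.Iio 1)) (nhds 0) := by
  have hGGcont : ContinuousOn (GG H₁ H₂ a) (Set.uIcc (0:ℝ) 1) :=
    intervalIntegral.continuousOn_primitive_interval'
      (psiA_intble hH₁ hH₂ a 0 1) Set.left_mem_uIcc
  have h0mem : (0:ℝ) ∈ Set.uIcc (0:ℝ) 1 := Set.left_mem_uIcc
  have hGG0 : GG H₁ H₂ a 0 = 0 := by unfold GG; simp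
  have hEv : ∀ᶠ x in nhdsWithin (1:ℝ) (Set.Iio 1), x ∈ Set.Ioo (0:ℝ) 1 := by
    have : Set.Ioo (0:ℝ) 1 ∈ nhdsWithin (1:ℝ) (Set.Iio 1) := by
      apply mem_nhdsWithin.2
      exact ⟨Set.Ioi 0, isOpen_Ioi, by norm_num, fun y hy => ⟨hy.1, hy.2⟩⟩
    exact this
  have hmap : Tendsto (fun x : ℝ => 1 - x) (nhdsWithin 1 (Set.Iio 1))
      (nhdsWithin 0 (Set.uIcc (0:ℝ) 1)) := by
    rw [tendsto_nhdsWithin_iff]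
    constructor
    · have : Tendsto (fun x : ℝ => 1 - x) (nhds 1) (nhds 0) := by
        have h := Continuous.tendsto
          (show Continuous (fun x : ℝ => 1 - x) from continuous_const.sub continuous_id) 1
        simpa using h
      exact this.mono_left nhdsWithin_le_nhds
    · filter_upwards [hEv] with x hx
      rw [Set.uIcc_of_le (by norm_num : (0:ℝ) ≤ 1)]
      exact ⟨by linarith [hx.2], by linarith [hx.1]⟩
  have hGGlim : Tendsto (fun x : ℝ => GG H₁ H₂ a (1 - x)) (nhdsWithin 1 (Set.Iio 1))
      (nhds 0) := by
    have := (hGGcont 0 h0mem).tendsto.comp hmap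
    rwa [hGG0] at this
  have hexp : Tendsto (fun x : ℝ => Real.exp (a * x)) (nhdsWithin 1 (Set.Iio 1))
      (nhds (Real.exp a)) := by
    have : Tendsto (fun x : ℝ => Real.exp (a * x)) (nhds 1) (nhds (Real.exp (a * 1))) :=
      (Real.continuous_exp.comp (continuous_const.mul continuous_id)).tendsto 1
    simpa using this.mono_left nhdsWithin_le_nhds
  have hprod := hexp.mul hGGlim
  rw [mul_zero] at hprod
  apply hprod.congr'
  filter_upwards [hEv] with x hx
  exact (gFun_repr hH₁ hH₂ a hx).symm

end aux

lemma rpow_tendsto_zero {q : ℝ} (hq : 0 < q) :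
    Tendsto (fun ε : ℝ => ε ^ q) (nhdsWithin 0 (Set.Ioi 0)) (nhds 0) := by
  have h := (Real.continuousAt_rpow_const 0 q (Or.inr hq.le)).continuousWithinAt
    (s := Set.Ioi 0)
  simpa [ContinuousWithinAt, Real.zero_rpow hq.ne'] using h

lemma qzero_ordered {p₁ p₂ A B : ℝ} (h₁ : p₁ < 0) (h₂ : p₂ < 0) (hle : p₂ ≤ p₁)
    (h : Tendsto (fun ε : ℝ => A * ε ^ p₁ + B * ε ^ p₂) (nhdsWithin 0 (Set.Ioi 0)) (nhds 0)) :
    ∀ ε : ℝ, 0 < ε → A * ε ^ p₁ + B * ε ^ p₂ = 0 := by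
  have hself : ∀ᶠ ε : ℝ in nhdsWithin 0 (Set.Ioi 0), 0 < ε :=
    eventually_mem_nhdsWithin
  rcases eq_or_lt_of_le hle with heq | hlt
  · subst heq
    have h' : Tendsto (fun ε : ℝ => ε ^ (-p₂) * (A * ε ^ p₂ + B * ε ^ p₂))
        (nhdsWithin 0 (Set.Ioi 0)) (nhds 0) := by
      simpa using (rpow_tendsto_zero (by linarith : (0:ℝ) < -p₂)).mul h
    have heq2 : (fun ε : ℝ => ε ^ (-p₂) * (A * ε ^ p₂ + B * ε ^ p₂))
        =ᶠ[nhdsWithin 0 (Set.Ioi 0)] (fun _ => A + B) := by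
      filter_upwards [hself] with ε hε
      have h1 : ε ^ (-p₂) * ε ^ p₂ = 1 := by
        rw [← Real.rpow_add hε]; simp
      linear_combination (A + B) * h1
    have hAB : A + B = 0 :=
      tendsto_nhds_unique (tendsto_const_nhds.congr' heq2.symm) h'
    intro ε hε
    linear_combination ε ^ p₂ * hAB
  · have h' : Tendsto (fun ε : ℝ => ε ^ (-p₂) * (A * ε ^ p₁ + B * ε ^ p₂))
        (nhdsWithin 0 (Set.Ioi 0)) (nhds 0) := by
      simpa using (rpow_tendsto_zero (by linarith : (0:ℝ) < -p₂)).mul h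
    have heq2 : (fun ε : ℝ => ε ^ (-p₂) * (A * ε ^ p₁ + B * ε ^ p₂))
        =ᶠ[nhdsWithin 0 (Set.Ioi 0)] (fun ε => A * ε ^ (p₁ - p₂) + B) := by
      filter_upwards [hself] with ε hε
      have h1 : ε ^ (-p₂) * ε ^ p₂ = 1 := by
        rw [← Real.rpow_add hε]; simp
      have h2 : ε ^ (p₁ - p₂) = ε ^ (-p₂) * ε ^ p₁ := by
        rw [← Real.rpow_add hε]; congr 1; ring
      linear_combination B * h1 - A * h2
    have hBlim : Tendsto (fun ε : ℝ => A * ε ^ (p₁ - p₂) + B)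
        (nhdsWithin 0 (Set.Ioi 0)) (nhds B) := by
      have := ((rpow_tendsto_zero (by linarith : (0:ℝ) < p₁ - p₂)).const_mul A).add
        (tendsto_const_nhds (x := B) (f := nhdsWithin (0:ℝ) (Set.Ioi 0)))
      simpa using this
    have hB : B = 0 := tendsto_nhds_unique hBlim (h'.congr' heq2)
    subst hB
    have h'' : Tendsto (fun ε : ℝ => ε ^ (-p₁) * (A * ε ^ p₁ + 0 * ε ^ p₂))
        (nhdsWithin 0 (Set.Ioi 0)) (nhds 0) := by
      simpa using (rpow_tendsto_zero (by linarith : (0:ℝ) < -p₁)).mul h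
    have heq3 : (fun ε : ℝ => ε ^ (-p₁) * (A * ε ^ p₁ + 0 * ε ^ p₂))
        =ᶠ[nhdsWithin 0 (Set.Ioi 0)] (fun _ => A) := by
      filter_upwards [hself] with ε hε
      have h1 : ε ^ (-p₁) * ε ^ p₁ = 1 := by
        rw [← Real.rpow_add hε]; simp
      linear_combination A * h1
    have hA : A = 0 :=
      tendsto_nhds_unique (tendsto_const_nhds.congr' heq3.symm) h''
    intro ε hε
    rw [hA]; ring

lemma qzero {p₁ p₂ A B : ℝ} (h₁ : p₁ < 0) (h₂ : p₂ < 0)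
    (h : Tendsto (fun ε : ℝ => A * ε ^ p₁ + B * ε ^ p₂) (nhdsWithin 0 (Set.Ioi 0)) (nhds 0)) :
    ∀ ε : ℝ, 0 < ε → A * ε ^ p₁ + B * ε ^ p₂ = 0 := by
  rcases le_total p₂ p₁ with hle | hle
  · exact qzero_ordered h₁ h₂ hle h
  · have h' := qzero_ordered (p₁ := p₂) (p₂ := p₁) (A := B) (B := A) h₂ h₁ hle
      (h.congr (fun ε => by ring))
    intro ε hε
    linarith [h' ε hε]

lemma moments {ι : Type*} (v : ι → ℝ) (S : Finset ι) :
    (∀ i ∈ S, ∀ j ∈ S, v i = v j → i = j) →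
    ∀ w : ι → ℝ, (∀ k : ℕ, ∑ i ∈ S, w i * v i ^ k = 0) → ∀ i ∈ S, w i = 0 := by
  classical
  induction S using Finset.induction_on with
  | empty => intro _ w _ i hi; simp at hi
  | @insert a₀ S' ha₀ ih =>
    intro hinj w hmom
    have hinj' : ∀ i ∈ S', ∀ j ∈ S', v i = v j → i = j := fun i hi j hj =>
      hinj i (Finset.mem_insert_of_mem hi) j (Finset.mem_insert_of_mem hj)
    have hmom' : ∀ k : ℕ, ∑ i ∈ S', (w i * (v i - v a₀)) * v i ^ k = 0 := by
      intro k
      have h1 := hmom (k + 1)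
      have h0 := hmom k
      rw [Finset.sum_insert ha₀] at h1 h0
      have e : ∀ i ∈ S', (w i * (v i - v a₀)) * v i ^ k
          = w i * v i ^ (k + 1) - v a₀ * (w i * v i ^ k) := by
        intro i _; rw [pow_succ]; ring
      rw [Finset.sum_congr rfl e, Finset.sum_sub_distrib, ← Finset.mul_sum]
      have hs1 : ∑ i ∈ S', w i * v i ^ (k + 1) = -(w a₀ * v a₀ ^ (k + 1)) := by linarith
      have hs0 : ∑ i ∈ S', w i * v i ^ k = -(w a₀ * v a₀ ^ k) := by linarith
      rw [hs1, hs0, pow_succ]; ring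
    have hzS' := ih hinj' _ hmom'
    have hwS' : ∀ i ∈ S', w i = 0 := by
      intro i hi
      have hne : v i ≠ v a₀ := by
        intro hv
        exact ha₀ (by rwa [hinj i (Finset.mem_insert_of_mem hi) a₀
          (Finset.mem_insert_self _ _) hv] at hi)
      rcases mul_eq_zero.1 (hzS' i hi) with h | h
      · exact h
      · exact absurd (by linarith : v i = v a₀) hne
    have hw0 : w a₀ = 0 := by
      have h0 := hmom 0
      rw [Finset.sum_insert ha₀] at h0
      have hz : ∑ i ∈ S', w i * v i ^ 0 = 0 :=
        Finset.sum_eq_zero fun i hi => by rw [hwS' i hi]; ring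
      rw [hz] at h0
      simpa using h0
    intro i hi
    rcases Finset.mem_insert.1 hi with rfl | hi'
    · exact hw0
    · exact hwS' i hi'

section main

variable {H₁ H₂ : ℝ} (hH₁ : H₁ ∈ Set.Ioo (1/2 : ℝ) 1) (hH₂ : H₂ ∈ Set.Ioo (1/2 : ℝ) 1)

include hH₁ hH₂ in
lemma psiA_pos {a : ℝ} (ha : 0 < a) : 0 < psiA H₁ H₂ a (1/2) := by
  have hc : ∀ h : ℝ, h ∈ Set.Ioo (1/2 : ℝ) 1 → 0 < cahConst a h := by
    intro h hh
    exact mul_pos (Real.rpow_pos_of_pos ha _)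
      (Real.Gamma_pos_of_pos (by linarith [hh.1]))
  unfold psiA
  have h1 : (0:ℝ) < (1/2 : ℝ) ^ (H₁ / 2 - 1) := Real.rpow_pos_of_pos (by norm_num) _
  have h2 : (0:ℝ) < (1/2 : ℝ) ^ (H₂ / 2 - 1) := Real.rpow_pos_of_pos (by norm_num) _
  exact add_pos (mul_pos (hc _ hH₂) h1) (mul_pos (hc _ hH₁) h2)

include hH₁ hH₂ in
lemma step_lemma (s : Finset ↥(Set.Ioi (0:ℝ))) (d : ↥(Set.Ioi (0:ℝ)) → ℝ)
    (h : ∀ x ∈ Set.Ioo (0:ℝ) 1, ∑ i ∈ s, d i * gFun H₁ H₂ (i:ℝ) x = 0) :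
    (∀ x ∈ Set.Ioo (0:ℝ) 1, ∑ i ∈ s, (d i * (i:ℝ)) * gFun H₁ H₂ (i:ℝ) x = 0) ∧
    (∑ i ∈ s, d i * Real.exp (i:ℝ) * psiA H₁ H₂ (i:ℝ) (1/2) = 0) := by
  have hp₁ : H₁ / 2 - 1 < 0 := by linarith [hH₁.2]
  have hp₂ : H₂ / 2 - 1 < 0 := by linarith [hH₂.2]
  set A : ℝ := ∑ i ∈ s, d i * Real.exp (i:ℝ) * cahConst (i:ℝ) H₂ with hA
  set B : ℝ := ∑ i ∈ s, d i * Real.exp (i:ℝ) * cahConst (i:ℝ) H₁ with hB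
  have hsum_psi : ∀ ε : ℝ, ∑ i ∈ s, d i * Real.exp (i:ℝ) * psiA H₁ H₂ (i:ℝ) ε
      = A * ε ^ (H₁ / 2 - 1) + B * ε ^ (H₂ / 2 - 1) := by
    intro ε
    rw [hA, hB, Finset.sum_mul, Finset.sum_mul, ← Finset.sum_add_distrib]
    apply Finset.sum_congr rfl
    intro i _
    unfold psiA
    ring
  have hkey : ∀ x ∈ Set.Ioo (0:ℝ) 1, ∑ i ∈ s, (d i * (i:ℝ)) * gFun H₁ H₂ (i:ℝ) x
      = A * (1 - x) ^ (H₁ / 2 - 1) + B * (1 - x) ^ (H₂ / 2 - 1) := by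
    intro x hx
    have hds : HasDerivAt (fun y => ∑ i ∈ s, d i * gFun H₁ H₂ (i:ℝ) y)
        (∑ i ∈ s, d i * ((i:ℝ) * gFun H₁ H₂ (i:ℝ) x
          - Real.exp (i:ℝ) * psiA H₁ H₂ (i:ℝ) (1 - x))) x :=
      HasDerivAt.fun_sum fun i _ => (gFun_hasDeriv hH₁ hH₂ (i:ℝ) hx).const_mul (d i)
    have hzero : HasDerivAt (fun y => ∑ i ∈ s, d i * gFun H₁ H₂ (i:ℝ) y) 0 x := by
      have hev : (fun y => ∑ i ∈ s, d i * gFun H₁ H₂ (i:ℝ) y) =ᶠ[nhds x]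
          (fun _ => (0:ℝ)) := by
        filter_upwards [Ioo_mem_nhds hx.1 hx.2] with y hy
        exact h y hy
      exact (hasDerivAt_const x (0:ℝ)).congr_of_eventuallyEq hev
    have huniq := hds.unique hzero
    have e : ∀ i ∈ s, d i * ((i:ℝ) * gFun H₁ H₂ (i:ℝ) x
        - Real.exp (i:ℝ) * psiA H₁ H₂ (i:ℝ) (1 - x))
        = (d i * (i:ℝ)) * gFun H₁ H₂ (i:ℝ) x
          - d i * Real.exp (i:ℝ) * psiA H₁ H₂ (i:ℝ) (1 - x) := by
      intro i _; ring
    rw [Finset.sum_congr rfl e, Finset.sum_sub_distrib] at huniq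
    have := hsum_psi (1 - x)
    linarith
  have htend0 : Tendsto (fun x => ∑ i ∈ s, (d i * (i:ℝ)) * gFun H₁ H₂ (i:ℝ) x)
      (nhdsWithin 1 (Set.Iio 1)) (nhds 0) := by
    have := tendsto_finset_sum s
      (fun i _ => ((gFun_tendsto hH₁ hH₂ (i:ℝ)).const_mul (d i * (i:ℝ))))
    simpa using this
  have hEv : ∀ᶠ x in nhdsWithin (1:ℝ) (Set.Iio 1), x ∈ Set.Ioo (0:ℝ) 1 := by
    have : Set.Ioo (0:ℝ) 1 ∈ nhdsWithin (1:ℝ) (Set.Iio 1) :=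
      mem_nhdsWithin.2 ⟨Set.Ioi 0, isOpen_Ioi, by norm_num, fun y hy => ⟨hy.1, hy.2⟩⟩
    exact this
  have htendAB : Tendsto (fun x => A * (1 - x) ^ (H₁ / 2 - 1) + B * (1 - x) ^ (H₂ / 2 - 1))
      (nhdsWithin 1 (Set.Iio 1)) (nhds 0) := by
    apply htend0.congr'
    filter_upwards [hEv] with x hx
    exact hkey x hx
  have hmap : Tendsto (fun ε : ℝ => 1 - ε) (nhdsWithin 0 (Set.Ioi 0))
      (nhdsWithin 1 (Set.Iio 1)) := by
    rw [tendsto_nhdsWithin_iff]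
    constructor
    · have h := Continuous.tendsto
        (show Continuous (fun ε : ℝ => 1 - ε) from continuous_const.sub continuous_id) 0
      simpa using h.mono_left nhdsWithin_le_nhds
    · filter_upwards [eventually_mem_nhdsWithin] with ε (hε : 0 < ε)
      simpa using hε
  have htendε : Tendsto (fun ε : ℝ => A * ε ^ (H₁ / 2 - 1) + B * ε ^ (H₂ / 2 - 1))
      (nhdsWithin 0 (Set.Ioi 0)) (nhds 0) := by
    have hc := htendAB.comp hmap
    apply hc.congr
    intro ε
    simp [Function.comp]
  have hq := qzero hp₁ hp₂ htendε
  constructor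
  · intro x hx
    rw [hkey x hx]
    exact hq (1 - x) (by linarith [hx.2])
  · rw [hsum_psi (1/2)]
    exact hq (1/2) (by norm_num)

end main


/-- The family `(g_a)_{a > 0}` is linearly independent in the space of functions `ℝ → ℝ`;
in particular, finitely many of them with distinct parameters span a subspace of full
dimension. -/
theorem gFun_linearIndependent (H₁ H₂ : ℝ) (hH₁ : H₁ ∈ Set.Ioo (1/2 : ℝ) 1)
    (hH₂ : H₂ ∈ Set.Ioo (1/2 : ℝ) 1) :
    LinearIndependent ℝ (fun a : Set.Ioi (0:ℝ) => gFun H₁ H₂ (a : ℝ)) := by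
  rw [linearIndependent_iff']
  intro s l hrel a ha
  have hIter : ∀ k : ℕ, ∀ x ∈ Set.Ioo (0:ℝ) 1,
      ∑ i ∈ s, (l i * (i:ℝ) ^ k) * gFun H₁ H₂ (i:ℝ) x = 0 := by
    intro k
    induction k with
    | zero =>
      intro x hx
      have h := congrFun hrel x
      simp only [Finset.sum_apply, Pi.smul_apply, smul_eq_mul, Pi.zero_apply] at h
      simpa [pow_zero, mul_one] using h
    | succ k ih =>
      intro x hx
      have h2 := (step_lemma hH₁ hH₂ s (fun i => l i * (i:ℝ) ^ k) ih).1 x hx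
      calc ∑ i ∈ s, (l i * (i:ℝ) ^ (k + 1)) * gFun H₁ H₂ (i:ℝ) x
          = ∑ i ∈ s, ((l i * (i:ℝ) ^ k) * (i:ℝ)) * gFun H₁ H₂ (i:ℝ) x :=
            Finset.sum_congr rfl fun i _ => by rw [pow_succ]; ring
        _ = 0 := h2
  have hRel : ∀ k : ℕ,
      ∑ i ∈ s, (l i * Real.exp (i:ℝ) * psiA H₁ H₂ (i:ℝ) (1/2)) * (i:ℝ) ^ k = 0 := by
    intro k
    have h2 := (step_lemma hH₁ hH₂ s (fun i => l i * (i:ℝ) ^ k) (hIter k)).2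
    calc ∑ i ∈ s, (l i * Real.exp (i:ℝ) * psiA H₁ H₂ (i:ℝ) (1/2)) * (i:ℝ) ^ k
        = ∑ i ∈ s, (l i * (i:ℝ) ^ k) * Real.exp (i:ℝ) * psiA H₁ H₂ (i:ℝ) (1/2) :=
          Finset.sum_congr rfl fun i _ => by ring
      _ = 0 := h2
  have hinj : ∀ i ∈ s, ∀ j ∈ s, ((i : ↥(Set.Ioi (0:ℝ))) : ℝ) = (j : ℝ) → i = j :=
    fun i _ j _ hv => Subtype.ext hv
  have hw := moments (fun i : ↥(Set.Ioi (0:ℝ)) => (i : ℝ)) s hinj _ hRel a ha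
  have hψ : 0 < psiA H₁ H₂ (a:ℝ) (1/2) := psiA_pos hH₁ hH₂ a.2
  have hexp : 0 < Real.exp (a:ℝ) := Real.exp_pos _
  by_contra hla
  exact (mul_ne_zero (mul_ne_zero hla hexp.ne') hψ.ne') hw
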